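/- Let Δ, a, b be real numbers with a > 0, 0 < b < √Δ ≤ 2a < b + √Δ, and (a − b)² + 3a² ≤ Δ. Then ((√Δ + b)·(4a − b − √Δ)) / ((√Δ − b)·(4a − b + √Δ)) ≤ ((2a + b + √Δ)·(b + √Δ − 2a)) / ((2a + b − √Δ)·(2a − b + √Δ)). Equivalently, the difference of the right-hand side minus the left-hand side equals 8a√Δ·(Δ − 3a² − (a − b)²) / ((√Δ − b)·(4a² − (√Δ − b)²)·(4a + √Δ − b)), which is non-negative under the stated hypotheses. -/

import Mathlib

/-- The key inequality of Case 2 of the proof of Theorem 1.1: `B_min⁴ ≤ B(Φ(f))⁴`, together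
with the stated closed form of the difference. -/
theorem Bmin_le_Bf (Δ a b : ℝ) (ha : 0 < a) (hb : 0 < b)
    (h1 : b < Real.sqrt Δ) (h2 : Real.sqrt Δ ≤ 2 * a) (h3 : 2 * a < b + Real.sqrt Δ)
    (h4 : (a - b) ^ 2 + 3 * a ^ 2 ≤ Δ) :
    ((Real.sqrt Δ + b) * (4 * a - b - Real.sqrt Δ)) /
        ((Real.sqrt Δ - b) * (4 * a - b + Real.sqrt Δ)) ≤
      ((2 * a + b + Real.sqrt Δ) * (b + Real.sqrt Δ - 2 * a)) /
        ((2 * a + b - Real.sqrt Δ) * (2 * a - b + Real.sqrt Δ)) ∧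
    ((2 * a + b + Real.sqrt Δ) * (b + Real.sqrt Δ - 2 * a)) /
        ((2 * a + b - Real.sqrt Δ) * (2 * a - b + Real.sqrt Δ)) -
      ((Real.sqrt Δ + b) * (4 * a - b - Real.sqrt Δ)) /
        ((Real.sqrt Δ - b) * (4 * a - b + Real.sqrt Δ)) =
      8 * a * Real.sqrt Δ * (Δ - 3 * a ^ 2 - (a - b) ^ 2) /
        ((Real.sqrt Δ - b) * (4 * a ^ 2 - (Real.sqrt Δ - b) ^ 2) * (4 * a + Real.sqrt Δ - b)) := by
  set s := Real.sqrt Δ with hs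
  have hΔ : 0 ≤ Δ := le_trans (by positivity) h4
  have hs2 : s ^ 2 = Δ := Real.sq_sqrt hΔ
  have hsb : 0 < s - b := by linarith
  have hd1 : 0 < 2 * a + b - s := by linarith
  have hd2 : 0 < 2 * a - b + s := by linarith
  have hd3 : 0 < 4 * a - b + s := by linarith
  have hd4 : 0 < 4 * a + s - b := by linarith
  have hsq : 0 < 4 * a ^ 2 - (s - b) ^ 2 := by nlinarith
  have hspos : 0 < s := lt_trans hb h1
  have heq : ((2 * a + b + s) * (b + s - 2 * a)) / ((2 * a + b - s) * (2 * a - b + s)) -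
      ((s + b) * (4 * a - b - s)) / ((s - b) * (4 * a - b + s)) =
      8 * a * s * (Δ - 3 * a ^ 2 - (a - b) ^ 2) /
        ((s - b) * (4 * a ^ 2 - (s - b) ^ 2) * (4 * a + s - b)) := by
    rw [← hs2]
    rw [div_sub_div _ _ (by positivity) (by positivity), div_eq_div_iff (by positivity) (by positivity)]
    ring
  refine ⟨?_, heq⟩
  have hn0 : 0 ≤ Δ - 3 * a ^ 2 - (a - b) ^ 2 := by linarith
  have hnum : 0 ≤ 8 * a * s * (Δ - 3 * a ^ 2 - (a - b) ^ 2) :=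
    mul_nonneg (by positivity) hn0
  have : 0 ≤ 8 * a * s * (Δ - 3 * a ^ 2 - (a - b) ^ 2) /
      ((s - b) * (4 * a ^ 2 - (s - b) ^ 2) * (4 * a + s - b)) := by positivity
  rw [← sub_nonneg, heq]; exact this
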